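/- Let T be a finite tree that is not isomorphic to the path P3 on three vertices. Then every vertex of T belongs to some independent [1,2]-set of T if and only if T has no strong support vertices. -/

import Mathlib

/-- A set of vertices is independent: no two of its vertices are adjacent. -/
def IndepSet {V : Type*} (G : SimpleGraph V) (S : Set V) : Prop :=
  ∀ u ∈ S, ∀ w ∈ S, ¬ G.Adj u w

/-- An independent [1,2]-set: an independent set such that every vertex outside it
has at least one and at most two neighbors in it. -/
def IsInd12Set {V : Type*} (G : SimpleGraph V) (S : Set V) : Prop :=
  IndepSet G S ∧
    ∀ u ∉ S, 1 ≤ (S ∩ G.neighborSet u).ncard ∧ (S ∩ G.neighborSet u).ncard ≤ 2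

/-- A leaf: a vertex of degree 1. -/
def IsLeaf {V : Type*} (G : SimpleGraph V) (w : V) : Prop :=
  (G.neighborSet w).ncard = 1

/-- A strong support vertex: a vertex having at least two leaves in its neighborhood. -/
def IsStrongSupport {V : Type*} (G : SimpleGraph V) (u : V) : Prop :=
  2 ≤ ({w | w ∈ G.neighborSet u ∧ IsLeaf G w}).ncard


open SimpleGraph

section Tree
variable {V : Type*} (T : SimpleGraph V) (htree : T.IsTree) (r : V)

noncomputable def thePath (u : V) : T.Walk u r := (htree.existsUnique_path u r).choose

lemma thePath_isPath (u : V) : (thePath T htree r u).IsPath :=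
  (htree.existsUnique_path u r).choose_spec.1

lemma thePath_unique {u : V} (p : T.Walk u r) (hp : p.IsPath) : p = thePath T htree r u :=
  (htree.existsUnique_path u r).choose_spec.2 p hp

noncomputable def depth (u : V) : ℕ := (thePath T htree r u).length

noncomputable def parent (u : V) : V := (thePath T htree r u).getVert 1

lemma thePath_root : thePath T htree r r = Walk.nil :=
  (thePath_unique T htree r Walk.nil (Walk.IsPath.nil)).symm

lemma depth_root : depth T htree r r = 0 := by
  rw [depth, thePath_root]; rfl

lemma depth_eq_zero {u : V} (h : depth T htree r u = 0) : u = r := by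
  have := (thePath T htree r u).eq_of_length_eq_zero h
  exact this

variable {r}

lemma thePath_cons {u : V} (hu : u ≠ r) :
    ∃ (h : T.Adj u (parent T htree r u)),
      thePath T htree r u = Walk.cons h (thePath T htree r (parent T htree r u)) := by
  have hnil : ¬ (thePath T htree r u).Nil := by
    intro hn
    exact hu ((thePath T htree r u).eq_of_length_eq_zero (Walk.nil_iff_length_eq.1 hn))
  obtain ⟨x, h, q, hq⟩ := Walk.not_nil_iff.1 hnil
  have hx : parent T htree r u = x := by
    rw [parent, hq, Walk.getVert_cons_succ, Walk.getVert_zero]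
  subst hx
  refine ⟨h, ?_⟩
  have hqp : q.IsPath := by
    have := thePath_isPath T htree r u
    rw [hq, Walk.cons_isPath_iff] at this
    exact this.1
  rw [hq, thePath_unique T htree r q hqp]

lemma parent_adj {u : V} (hu : u ≠ r) : T.Adj u (parent T htree r u) :=
  (thePath_cons T htree hu).choose

lemma depth_parent {u : V} (hu : u ≠ r) :
    depth T htree r u = depth T htree r (parent T htree r u) + 1 := by
  obtain ⟨h, hq⟩ := thePath_cons T htree hu
  rw [depth, depth, hq, Walk.length_cons]

/-- adjacency classification in a tree: one endpoint is the parent of the other. -/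
lemma adj_classify {u w : V} (h : T.Adj u w) :
    (w ≠ r ∧ parent T htree r w = u) ∨ (u ≠ r ∧ parent T htree r u = w) := by
  classical
  by_cases hus : u ∈ (thePath T htree r w).support
  · left
    have hwr : w ≠ r := by
      rintro rfl
      rw [thePath_root] at hus
      simp only [Walk.support_nil, List.mem_singleton] at hus
      exact T.irrefl (hus ▸ h)
    refine ⟨hwr, ?_⟩
    have hsplit := (thePath T htree r w).take_spec hus
    have htake : ((thePath T htree r w).takeUntil u hus) =
        Walk.cons h.symm (Walk.nil' u) := by
      have h1 : ((thePath T htree r w).takeUntil u hus).IsPath :=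
        (thePath_isPath T htree r w).takeUntil hus
      have h2 : (Walk.cons h.symm (Walk.nil' u)).IsPath := by
        simp [Walk.cons_isPath_iff, h.ne']
      have := (htree.existsUnique_path w u).unique h1 h2
      exact this
    have : thePath T htree r w =
        Walk.cons h.symm ((thePath T htree r w).dropUntil u hus) := by
      conv_lhs => rw [← hsplit]
      rw [htake]
      rfl
    rw [parent, this, Walk.getVert_cons_succ, Walk.getVert_zero]
  · right
    have hur : u ≠ r := by
      rintro rfl
      exact hus (Walk.end_mem_support _)
    refine ⟨hur, ?_⟩
    have hp : (Walk.cons h (thePath T htree r w)).IsPath := by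
      rw [Walk.cons_isPath_iff]
      exact ⟨thePath_isPath T htree r w, hus⟩
    have := thePath_unique T htree r _ hp
    rw [parent, ← this, Walk.getVert_cons_succ, Walk.getVert_zero]

end Tree
section Tree2
variable {V : Type*} (T : SimpleGraph V) (htree : T.IsTree) (r : V)

def children (u : V) : Set V := {w | w ≠ r ∧ parent T htree r w = u}

variable {r}

lemma child_adj {u w : V} (hw : w ∈ children T htree r u) : T.Adj u w :=
  (hw.2 ▸ (parent_adj T htree hw.1)).symm

lemma child_depth {u w : V} (hw : w ∈ children T htree r u) :
    depth T htree r w = depth T htree r u + 1 := by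
  rw [depth_parent T htree hw.1, hw.2]

lemma parent_not_child {u : V} (hu : u ≠ r) :
    parent T htree r u ∉ children T htree r u := by
  intro hc
  have h1 := child_depth T htree hc
  have h2 := depth_parent T htree hu
  omega

open Classical in
lemma neighborSet_eq (u : V) :
    T.neighborSet u = children T htree r u ∪ (if u = r then ∅ else {parent T htree r u}) := by
  ext w
  simp only [mem_neighborSet, Set.mem_union]
  constructor
  · intro h
    rcases adj_classify T htree h with ⟨h1, h2⟩ | ⟨h1, h2⟩
    · exact Or.inl ⟨h1, h2⟩
    · right; rw [if_neg h1]; exact Set.mem_singleton_iff.2 h2.symm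
  · rintro (hc | hp)
    · exact child_adj T htree hc
    · by_cases hur : u = r
      · rw [if_pos hur] at hp; exact absurd hp (Set.notMem_empty w)
      · rw [if_neg hur, Set.mem_singleton_iff] at hp
        exact hp ▸ parent_adj T htree hur

open Classical in
lemma neighborSet_eq_of_ne {u : V} (hu : u ≠ r) :
    T.neighborSet u = insert (parent T htree r u) (children T htree r u) := by
  rw [neighborSet_eq T htree u, if_neg hu, Set.union_singleton]

variable [Fintype V]

lemma leaf_iff_children_empty {u : V} (hu : u ≠ r) :
    IsLeaf T u ↔ children T htree r u = ∅ := by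
  rw [IsLeaf, neighborSet_eq_of_ne T htree hu]
  constructor
  · intro h
    have hfin : (insert (parent T htree r u) (children T htree r u)).Finite :=
      Set.toFinite _
    have hc : (children T htree r u).Finite := Set.toFinite _
    rw [Set.ncard_insert_of_notMem (parent_not_child T htree hu) hc] at h
    have := Nat.succ_injective h
    exact Set.ncard_eq_zero hc |>.1 this
  · intro h
    rw [h]
    simp

lemma exists_child_of_not_leaf {u : V} (hu : u ≠ r) (hl : ¬ IsLeaf T u) :
    (children T htree r u).Nonempty := by
  rw [Set.nonempty_iff_ne_empty]
  intro h
  exact hl ((leaf_iff_children_empty T htree hu).2 h)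

/-- leaf neighbors of a vertex -/
def leafNbrs (u : V) : Set V := {w | w ∈ T.neighborSet u ∧ IsLeaf T w}

lemma leafNbrs_small {u : V} (h : ¬ IsStrongSupport T u) :
    (leafNbrs T u).ncard ≤ 1 := by
  rw [IsStrongSupport, not_le] at h
  have : leafNbrs T u = {w | w ∈ T.neighborSet u ∧ IsLeaf T w} := rfl
  rw [this]; omega

end Tree2
section Label
variable {V : Type*} (T : SimpleGraph V) (htree : T.IsTree) (r : V)

open Classical in
/-- select a child, preferring leaf children -/
noncomputable def sel (p : V) : V :=
  if h : ∃ c, c ∈ children T htree r p ∧ IsLeaf T c then h.choose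
  else if h2 : (children T htree r p).Nonempty then h2.choose else p

lemma sel_mem {p : V} (h : (children T htree r p).Nonempty) :
    sel T htree r p ∈ children T htree r p := by
  rw [sel]
  by_cases h1 : ∃ c, c ∈ children T htree r p ∧ IsLeaf T c
  · rw [dif_pos h1]; exact h1.choose_spec.1
  · rw [dif_neg h1, dif_pos h]; exact h.choose_spec

lemma sel_leaf {p c : V} (hc : c ∈ children T htree r p) (hl : IsLeaf T c) :
    sel T htree r p ∈ children T htree r p ∧ IsLeaf T (sel T htree r p) := by
  rw [sel]
  have h1 : ∃ c, c ∈ children T htree r p ∧ IsLeaf T c := ⟨c, hc, hl⟩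
  rw [dif_pos h1]
  exact h1.choose_spec

open Classical in
noncomputable def label (u : V) : ℕ :=
  if h : u = r then 0
  else
    have hd : depth T htree r (parent T htree r u) < depth T htree r u := by
      rw [depth_parent T htree h]; omega
    let lp := label (parent T htree r u)
    if lp = 0 then 1
    else if lp = 1 then (if IsLeaf T u then 0 else 2)
    else (if u = sel T htree r (parent T htree r u) then 0 else 2)
termination_by depth T htree r u

lemma label_root : label T htree r r = 0 := by
  rw [label]; simp

open Classical in
lemma label_of_ne {u : V} (h : u ≠ r) :
    label T htree r u =
      (if label T htree r (parent T htree r u) = 0 then 1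
       else if label T htree r (parent T htree r u) = 1 then (if IsLeaf T u then 0 else 2)
       else (if u = sel T htree r (parent T htree r u) then 0 else 2)) := by
  rw [label]
  simp [h]

lemma label_le_two (u : V) : label T htree r u ≤ 2 := by
  by_cases h : u = r
  · subst h; rw [label_root]; omega
  · rw [label_of_ne T htree r h]
    split_ifs <;> omega

lemma label_ne_root {u : V} (h : label T htree r u ≠ 0) : u ≠ r := by
  rintro rfl
  exact h (label_root T htree _)

lemma label_one_iff {u : V} (h : u ≠ r) :
    label T htree r u = 1 ↔ label T htree r (parent T htree r u) = 0 := by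
  rw [label_of_ne T htree r h]
  split_ifs with h1 h2 h3 h4 <;> simp [h1]

end Label
section Main
variable {V : Type*} [Fintype V] (T : SimpleGraph V) (htree : T.IsTree) (r : V)

lemma label_two_not_leaf (hss : ∀ u, ¬ IsStrongSupport T u) {u : V}
    (h2 : label T htree r u = 2) : ¬ IsLeaf T u := by
  intro hl
  have hur : u ≠ r := label_ne_root T htree r (by omega)
  have hu := label_of_ne T htree r hur
  rw [h2] at hu
  by_cases hp0 : label T htree r (parent T htree r u) = 0
  · rw [if_pos hp0] at hu; omega
  rw [if_neg hp0] at hu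
  by_cases hp1 : label T htree r (parent T htree r u) = 1
  · rw [if_pos hp1, if_pos hl] at hu; omega
  rw [if_neg hp1] at hu
  have hsel : u ≠ sel T htree r (parent T htree r u) := by
    intro hs; rw [if_pos hs] at hu; omega
  -- u is a leaf child of p := parent u, and sel p is another leaf child
  set p := parent T htree r u with hp
  have hu_child : u ∈ children T htree r p := ⟨hur, rfl⟩
  obtain ⟨hsel_child, hsel_leaf⟩ := sel_leaf T htree r hu_child hl
  have h2le : 2 ≤ (leafNbrs T p).ncard := by
    have hsub : ({u, sel T htree r p} : Set V) ⊆ leafNbrs T p := by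
      rintro x (rfl | rfl)
      · exact ⟨child_adj T htree hu_child, hl⟩
      · exact ⟨child_adj T htree hsel_child, hsel_leaf⟩
    calc 2 = ({u, sel T htree r p} : Set V).ncard := by
            rw [Set.ncard_pair hsel]
      _ ≤ (leafNbrs T p).ncard := Set.ncard_le_ncard hsub (Set.toFinite _)
  have := leafNbrs_small T (hss p)
  omega

lemma main_construction (hss : ∀ u, ¬ IsStrongSupport T u) :
    IsInd12Set T {w | label T htree r w = 0} ∧ r ∈ {w | label T htree r w = 0} := by
  set S : Set V := {w | label T htree r w = 0} with hS
  have hmem : ∀ w, w ∈ S ↔ label T htree r w = 0 := fun _ => Iff.rfl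
  -- children of an S vertex are not in S
  have hchild_of_S : ∀ {u w : V}, u ∈ S → w ∈ children T htree r u → w ∉ S := by
    intro u w hu hw hwS
    rw [hmem] at hu hwS
    rw [label_of_ne T htree r hw.1, hw.2, if_pos hu] at hwS
    omega
  refine ⟨⟨?_, ?_⟩, label_root T htree r⟩
  · -- independence
    intro u hu w hw hadj
    rcases adj_classify T htree hadj with ⟨h1, h2⟩ | ⟨h1, h2⟩
    · exact hchild_of_S hu ⟨h1, h2⟩ hw
    · exact hchild_of_S hw ⟨h1, h2⟩ hu
  · intro u huS
    rw [hmem] at huS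
    have hur : u ≠ r := label_ne_root T htree r huS
    have hle := label_le_two T htree r u
    have hfin : (S ∩ T.neighborSet u).Finite := Set.toFinite _
    rcases Nat.lt_or_ge (label T htree r u) 2 with h1 | h2
    · -- label u = 1
      have h1 : label T htree r u = 1 := by omega
      have hp0 : label T htree r (parent T htree r u) = 0 :=
        (label_one_iff T htree r hur).1 h1
      constructor
      · rw [Nat.one_le_iff_ne_zero, Ne, Set.ncard_eq_zero hfin,
          ← Set.not_nonempty_iff_eq_empty, not_not]
        exact ⟨parent T htree r u, hp0, parent_adj T htree hur⟩
      · have hsub : S ∩ T.neighborSet u ⊆ insert (parent T htree r u) (leafNbrs T u) := by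
          rintro w ⟨hwS, hwN⟩
          by_cases hwp : w = parent T htree r u
          · exact hwp ▸ Set.mem_insert _ _
          · have hwc : w ∈ children T htree r u := by
              have := neighborSet_eq_of_ne T htree hur ▸ hwN
              rcases this with h | h
              · exact absurd h hwp
              · exact h
            rw [hmem] at hwS
            rw [label_of_ne T htree r hwc.1, hwc.2, if_neg (by omega), if_pos h1] at hwS
            have hwleaf : IsLeaf T w := by
              by_contra hnl
              rw [if_neg hnl] at hwS; omega
            exact Set.mem_insert_of_mem _ ⟨hwN, hwleaf⟩
        calc (S ∩ T.neighborSet u).ncard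
            ≤ (insert (parent T htree r u) (leafNbrs T u)).ncard :=
              Set.ncard_le_ncard hsub (Set.toFinite _)
          _ ≤ (leafNbrs T u).ncard + 1 := Set.ncard_insert_le _ _
          _ ≤ 2 := by have := leafNbrs_small T (hss u); omega
    · -- label u = 2
      have h2 : label T htree r u = 2 := by omega
      have hnl : ¬ IsLeaf T u := label_two_not_leaf T htree r hss h2
      have hcne : (children T htree r u).Nonempty := exists_child_of_not_leaf T htree hur hnl
      set c := sel T htree r u with hc
      have hc_child : c ∈ children T htree r u := sel_mem T htree r hcne
      have hp_not0 : label T htree r (parent T htree r u) ≠ 0 := by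
        intro hp0
        rw [label_of_ne T htree r hur, if_pos hp0] at h2; omega
      have heq : S ∩ T.neighborSet u = {c} := by
        apply Set.eq_singleton_iff_unique_mem.2
        constructor
        · refine ⟨?_, child_adj T htree hc_child⟩
          rw [hmem, label_of_ne T htree r hc_child.1, hc_child.2,
            if_neg (by omega), if_neg (by omega), if_pos hc]
        · rintro w ⟨hwS, hwN⟩
          have hwc : w ∈ children T htree r u := by
            have := neighborSet_eq_of_ne T htree hur ▸ hwN
            rcases this with h | h
            · exact absurd (hmem w |>.1 (h ▸ hwS)) (h ▸ hp_not0)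
            · exact h
          rw [hmem, label_of_ne T htree r hwc.1, hwc.2,
            if_neg (by omega), if_neg (by omega)] at hwS
          by_contra hne
          rw [if_neg hne] at hwS; omega
      rw [heq, Set.ncard_singleton]
      omega

end Main
section Forward
variable {V : Type*} [Fintype V] {T : SimpleGraph V}

lemma leaf_nbhd {w u : V} (hl : IsLeaf T w) (hu : u ∈ T.neighborSet w) :
    T.neighborSet w = {u} := by
  obtain ⟨a, ha⟩ := Set.ncard_eq_one.1 hl
  rw [ha] at hu ⊢
  rw [Set.mem_singleton_iff] at hu
  rw [hu]

lemma forward_dir (htree : T.IsTree)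
    (hnotP3 : ¬ Nonempty (T ≃g SimpleGraph.pathGraph 3))
    (h : ∀ v : V, ∃ S : Set V, IsInd12Set T S ∧ v ∈ S) (u : V) :
    ¬ IsStrongSupport T u := by
  classical
  intro hss
  rw [IsStrongSupport] at hss
  have hlt : 1 < ({w | w ∈ T.neighborSet u ∧ IsLeaf T w}).ncard := by omega
  obtain ⟨w1, w2, hw1, hw2, hne⟩ := (Set.one_lt_ncard_iff (Set.toFinite _)).1 hlt
  obtain ⟨hw1N, hw1L⟩ := hw1
  obtain ⟨hw2N, hw2L⟩ := hw2
  -- u has a third neighbor, otherwise T ≃ P3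
  have hx : ∃ x ∈ T.neighborSet u, x ≠ w1 ∧ x ≠ w2 := by
    by_contra hno
    push_neg at hno
    have hNu : T.neighborSet u = {w1, w2} := by
      apply Set.Subset.antisymm
      · intro x hxN
        by_cases h1 : x = w1
        · exact Or.inl h1
        · exact Or.inr (hno x hxN h1)
      · rintro x (rfl | rfl)
        · exact hw1N
        · exact hw2N
    -- the vertex set is {u, w1, w2}
    have hNw1 : T.neighborSet w1 = {u} := leaf_nbhd hw1L ((T.mem_neighborSet _ _).2 hw1N.symm)
    have hNw2 : T.neighborSet w2 = {u} := leaf_nbhd hw2L ((T.mem_neighborSet _ _).2 hw2N.symm)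
    set A : Set V := {u, w1, w2} with hA
    have hclosed : ∀ a b : V, T.Adj a b → a ∈ A → b ∈ A := by
      rintro a b hab (rfl | rfl | rfl)
      · have : b ∈ T.neighborSet a := hab
        rw [hNu] at this
        rcases this with rfl | rfl
        · exact Or.inr (Or.inl rfl)
        · exact Or.inr (Or.inr rfl)
      · have : b ∈ T.neighborSet a := hab
        rw [hNw1] at this
        rw [Set.mem_singleton_iff] at this
        exact Or.inl this
      · have : b ∈ T.neighborSet a := hab
        rw [hNw2] at this
        rw [Set.mem_singleton_iff] at this
        exact Or.inl this
    have hall : ∀ z : V, z ∈ A := by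
      have key : ∀ {a z : V} (p : T.Walk a z), a ∈ A → z ∈ A := by
        intro a z p
        induction p with
        | nil => exact id
        | cons hadj q ih => intro ha; exact ih (hclosed _ _ hadj ha)
      intro z
      obtain ⟨p⟩ := htree.isConnected.preconnected u z
      exact key p (Or.inl rfl)
    -- distinctness
    have huw1 : u ≠ w1 := fun h' => T.irrefl (h' ▸ hw1N)
    have huw2 : u ≠ w2 := fun h' => T.irrefl (h' ▸ hw2N)
    have hnadj : ¬ T.Adj w1 w2 := by
      intro had
      have : w2 ∈ T.neighborSet w1 := had
      rw [hNw1, Set.mem_singleton_iff] at this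
      exact huw2 this.symm
    -- build the iso
    apply hnotP3
    refine ⟨⟨⟨fun z => if z = u then 1 else if z = w1 then 0 else 2,
      fun i => if i = 0 then w1 else if i = 1 then u else w2, ?_, ?_⟩, ?_⟩⟩
    · intro z
      rcases hall z with rfl | rfl | rfl
      · simp
      · simp [huw1.symm]
      · simp [huw2.symm, hne.symm]
    · intro i
      fin_cases i
      · simp [huw1.symm]
      · simp
      · simp [huw2.symm, hne.symm]
    · intro a b
      simp only [Equiv.coe_fn_mk]
      have hadj1 : T.Adj u w1 := hw1N
      have hadj2 : T.Adj u w2 := hw2N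
      have hnadj' : ¬ T.Adj w2 w1 := fun h' => hnadj (T.adj_symm h')
      rcases hall a with ha | ha | ha <;> rcases hall b with hb | hb | hb <;>
        rw [ha, hb] <;>
        simp [huw1.symm, huw2.symm, hne, hne.symm, SimpleGraph.pathGraph_adj,
          SimpleGraph.irrefl, hadj1, hadj2, hadj1.symm, hadj2.symm, hnadj, hnadj',
          Fin.ext_iff]
  obtain ⟨x, hxN, hxw1, hxw2⟩ := hx
  obtain ⟨S, ⟨hind, hcount⟩, hxS⟩ := h x
  have huS : u ∉ S := fun huS => hind u huS x hxS hxN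
  have hw1S : w1 ∈ S := by
    by_contra hw1S
    have h1 := (hcount w1 hw1S).1
    obtain ⟨z, hzS, hzN⟩ := by
      rw [Nat.one_le_iff_ne_zero, Ne, Set.ncard_eq_zero (Set.toFinite _),
        ← Set.not_nonempty_iff_eq_empty, not_not] at h1
      exact h1
    rw [leaf_nbhd hw1L ((T.mem_neighborSet _ _).2 hw1N.symm), Set.mem_singleton_iff] at hzN
    exact huS (hzN ▸ hzS)
  have hw2S : w2 ∈ S := by
    by_contra hw2S
    have h1 := (hcount w2 hw2S).1
    obtain ⟨z, hzS, hzN⟩ := by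
      rw [Nat.one_le_iff_ne_zero, Ne, Set.ncard_eq_zero (Set.toFinite _),
        ← Set.not_nonempty_iff_eq_empty, not_not] at h1
      exact h1
    rw [leaf_nbhd hw2L ((T.mem_neighborSet _ _).2 hw2N.symm), Set.mem_singleton_iff] at hzN
    exact huS (hzN ▸ hzS)
  have h3 : ({w1, w2, x} : Set V) ⊆ S ∩ T.neighborSet u := by
    rintro z (rfl | rfl | rfl)
    · exact ⟨hw1S, hw1N⟩
    · exact ⟨hw2S, hw2N⟩
    · exact ⟨hxS, hxN⟩
  have hcard : 3 ≤ (S ∩ T.neighborSet u).ncard := by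
    have h3c : ({w1, w2, x} : Set V).ncard = 3 := by
      rw [Set.ncard_insert_of_notMem (by simp [hne, hxw1.symm]) (Set.toFinite _),
        Set.ncard_pair (Ne.symm hxw2)]
    calc 3 = ({w1, w2, x} : Set V).ncard := h3c.symm
      _ ≤ _ := Set.ncard_le_ncard h3 (Set.toFinite _)
  have := (hcount u huS).2
  omega

end Forward


theorem statement6 {V : Type*} [Fintype V] (T : SimpleGraph V) (htree : T.IsTree)
    (hnotP3 : ¬ Nonempty (T ≃g SimpleGraph.pathGraph 3)) :
    (∀ v : V, ∃ S : Set V, IsInd12Set T S ∧ v ∈ S) ↔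
      ∀ u : V, ¬ IsStrongSupport T u := by
  constructor
  · exact forward_dir htree hnotP3
  · intro hss v
    obtain ⟨h1, h2⟩ := main_construction T htree v hss
    exact ⟨_, h1, h2⟩
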